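/- For n ≥ 2, 1 ≤ q < n/(n-1), and f ∈ L^1(R^n), define A_3(x) = ∫_{|y| > 2|x|} |f(y)| |y|^{1-n} dy. Then (∫_{R^n} A_3(x)^q |x|^{n(q-1)-q} dx)^{1/q} ≤ c(n,q) ‖f‖_{L^1}. -/

import Mathlib

open MeasureTheory Metric Set
open scoped ENNReal NNReal

noncomputable section


lemma aux_scaling (n : ℕ) (hn : 2 ≤ n) {R : ℝ} (hR : 0 < R) :
    ∫⁻ x in ball (0 : EuclideanSpace ℝ (Fin n)) R, ENNReal.ofReal (‖x‖ ^ (-1 : ℝ))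
      = ENNReal.ofReal (R ^ ((n : ℝ) - 1)) *
        ∫⁻ x in ball (0 : EuclideanSpace ℝ (Fin n)) 1, ENNReal.ofReal (‖x‖ ^ (-1 : ℝ)) := by
  haveI : Nonempty (Fin n) := ⟨⟨0, by omega⟩⟩
  set E := EuclideanSpace ℝ (Fin n)
  have hfr : Module.finrank ℝ E = n := finrank_euclideanSpace_fin
  set φ : E → ℝ≥0∞ := fun x => ENNReal.ofReal (‖x‖ ^ (-1 : ℝ)) with hφ
  have hφm : Measurable φ := by rw [hφ]; fun_prop
  set g : E → ℝ≥0∞ := fun x => (ball (0 : E) R).indicator φ x with hgdef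
  have hgm : Measurable g := hφm.indicator measurableSet_ball
  have hmap := Measure.map_addHaar_smul (volume : Measure E) (r := R) hR.ne'
  have h1 : ∫⁻ x, g x ∂(Measure.map (fun x : E => R • x) volume) = ∫⁻ x, g (R • x) :=
    lintegral_map hgm (measurable_const_smul R)
  rw [hmap, lintegral_smul_measure] at h1
  have h2 : ∀ x : E, g (R • x) =
      ENNReal.ofReal R⁻¹ * (ball (0 : E) 1).indicator φ x := by
    intro x
    have hnorm : ‖R • x‖ = R * ‖x‖ := by
      rw [norm_smul, Real.norm_eq_abs, abs_of_pos hR]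
    rw [hgdef]
    simp only
    by_cases hx : x ∈ ball (0 : E) 1
    · have hx' : R • x ∈ ball (0 : E) R := by
        rw [mem_ball_zero_iff] at hx ⊢
        rw [hnorm]
        calc R * ‖x‖ < R * 1 := by nlinarith
          _ = R := mul_one R
      rw [indicator_of_mem hx', indicator_of_mem hx, hφ]
      simp only
      rw [hnorm, Real.mul_rpow hR.le (norm_nonneg x), Real.rpow_neg_one,
        ENNReal.ofReal_mul (by positivity)]
    · have hx' : R • x ∉ ball (0 : E) R := by
        rw [mem_ball_zero_iff] at hx ⊢
        rw [hnorm]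
        intro hc
        exact hx (by nlinarith)
      rw [indicator_of_notMem hx', indicator_of_notMem hx, mul_zero]
  have h3 : ∫⁻ x, g (R • x) = ENNReal.ofReal R⁻¹ *
      ∫⁻ x in ball (0 : E) 1, φ x := by
    simp only [h2]
    rw [lintegral_const_mul' _ _ ENNReal.ofReal_ne_top, lintegral_indicator measurableSet_ball]
  have h4 : ∫⁻ x, g x = ∫⁻ x in ball (0 : E) R, φ x :=
    lintegral_indicator measurableSet_ball φ
  rw [h4, h3, hfr] at h1
  have hRn : (0 : ℝ) < R ^ n := pow_pos hR n
  have key := congrArg (fun z => ENNReal.ofReal (R ^ n) * z) h1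
  simp only [smul_eq_mul] at key
  rw [← mul_assoc, ← ENNReal.ofReal_mul hRn.le, abs_of_pos (inv_pos.2 hRn),
    mul_inv_cancel₀ hRn.ne', ENNReal.ofReal_one, one_mul, ← mul_assoc,
    ← ENNReal.ofReal_mul hRn.le] at key
  rw [key]
  congr 2
  rw [← Real.rpow_natCast R n, ← Real.rpow_neg_one R, ← Real.rpow_add hR]
  ring_nf

lemma aux_finite (n : ℕ) (hn : 2 ≤ n) :
    ∫⁻ x in ball (0 : EuclideanSpace ℝ (Fin n)) 1, ENNReal.ofReal (‖x‖ ^ (-1 : ℝ)) < ⊤ := by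
  haveI : Nonempty (Fin n) := ⟨⟨0, by omega⟩⟩
  set E := EuclideanSpace ℝ (Fin n)
  have hfr : Module.finrank ℝ E = n := finrank_euclideanSpace_fin
  set φ : E → ℝ≥0∞ := fun x => ENNReal.ofReal (‖x‖ ^ (-1 : ℝ)) with hφ
  set A : ℕ → Set E := fun k => {x : E | (2⁻¹ : ℝ) ^ (k+1) ≤ ‖x‖ ∧ ‖x‖ < (2⁻¹ : ℝ) ^ k} with hA
  have hsub : ball (0 : E) 1 \ {0} ⊆ ⋃ k, A k := by
    intro x hx
    obtain ⟨hx1, hx0⟩ := hx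
    rw [mem_ball_zero_iff] at hx1
    have hx0' : (0:ℝ) < ‖x‖ := norm_pos_iff.2 (by simpa using hx0)
    have hex : ∃ m : ℕ, (2⁻¹ : ℝ) ^ m ≤ ‖x‖ := by
      obtain ⟨m, hm⟩ := exists_pow_lt_of_lt_one hx0' (by norm_num : (2⁻¹:ℝ) < 1)
      exact ⟨m, hm.le⟩
    classical
    set m := Nat.find hex with hm
    have hmle : (2⁻¹ : ℝ) ^ m ≤ ‖x‖ := Nat.find_spec hex
    have hm0 : m ≠ 0 := by
      intro h0
      rw [h0] at hmle
      simp at hmle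
      linarith
    refine mem_iUnion.2 ⟨m - 1, ?_, ?_⟩
    · have hme : m - 1 + 1 = m := by omega
      rwa [hme]
    · have := Nat.find_min hex (m := m - 1) (by omega)
      push_neg at this
      exact this
  have hnull : (volume : Measure E) {(0 : E)} = 0 := measure_singleton _
  have hmono : ∫⁻ x in ball (0 : E) 1, φ x = ∫⁻ x in ball (0 : E) 1 \ {0}, φ x := by
    have hae : (ball (0 : E) 1 \ ({0} : Set E) : Set E) =ᵐ[volume] (ball (0 : E) 1 : Set E) :=
      diff_ae_eq_self.2 (measure_mono_null inter_subset_right hnull)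
    rw [Measure.restrict_congr_set hae.symm]
  set B₁ := (volume : Measure E) (ball (0 : E) 1) with hB₁
  have hterm : ∀ k : ℕ, ∫⁻ x in A k, φ x ≤ ENNReal.ofReal (2 * (2⁻¹:ℝ) ^ k) * B₁ := by
    intro k
    have hpos : (0:ℝ) < (2⁻¹:ℝ) ^ (k+1) := by positivity
    have hb : ∀ x ∈ A k, φ x ≤ ENNReal.ofReal ((2:ℝ) ^ (k+1)) := by
      intro x hx
      obtain ⟨h1, h2⟩ := hx
      have hx0 : (0:ℝ) < ‖x‖ := lt_of_lt_of_le hpos h1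
      rw [hφ]
      simp only
      rw [Real.rpow_neg_one]
      apply ENNReal.ofReal_le_ofReal
      have : ‖x‖⁻¹ ≤ ((2⁻¹:ℝ) ^ (k+1))⁻¹ := inv_anti₀ hpos h1
      rwa [← inv_pow, inv_inv] at this
    have hsubball : A k ⊆ ball (0:E) ((2⁻¹:ℝ) ^ k) := by
      intro x hx
      exact mem_ball_zero_iff.2 hx.2
    have hreal : (2:ℝ) ^ (k+1) * ((2⁻¹:ℝ) ^ k) ^ n ≤ 2 * (2⁻¹:ℝ) ^ k := by
      have h1 : (((2⁻¹:ℝ)) ^ k) ^ n ≤ (((2⁻¹:ℝ)) ^ k) ^ 2 :=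
        pow_le_pow_of_le_one (by positivity) (by
          apply pow_le_one₀ <;> norm_num) hn
      have ha : (0:ℝ) < 2 ^ k := by positivity
      have h2 : (2:ℝ) ^ (k+1) * (((2⁻¹:ℝ)) ^ k) ^ 2 = 2 * (2⁻¹:ℝ) ^ k := by
        rw [inv_pow, pow_succ]
        field_simp
      calc (2:ℝ) ^ (k+1) * ((2⁻¹:ℝ) ^ k) ^ n
          ≤ (2:ℝ) ^ (k+1) * ((2⁻¹:ℝ) ^ k) ^ 2 := by
            apply mul_le_mul_of_nonneg_left h1 (by positivity)
        _ = 2 * (2⁻¹:ℝ) ^ k := h2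
    calc ∫⁻ x in A k, φ x ≤ ∫⁻ _ in A k, ENNReal.ofReal ((2:ℝ) ^ (k+1)) :=
          setLIntegral_mono measurable_const hb
      _ = ENNReal.ofReal ((2:ℝ) ^ (k+1)) * volume (A k) := setLIntegral_const _ _
      _ ≤ ENNReal.ofReal ((2:ℝ) ^ (k+1)) * volume (ball (0:E) ((2⁻¹:ℝ) ^ k)) := by
          exact mul_le_mul_right (measure_mono hsubball) _
      _ = ENNReal.ofReal ((2:ℝ) ^ (k+1)) *
            (ENNReal.ofReal (((2⁻¹:ℝ) ^ k) ^ n) * B₁) := by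
          rw [Measure.addHaar_ball volume 0 (by positivity), hfr]
      _ = ENNReal.ofReal ((2:ℝ) ^ (k+1) * ((2⁻¹:ℝ) ^ k) ^ n) * B₁ := by
          rw [← mul_assoc, ← ENNReal.ofReal_mul (by positivity)]
      _ ≤ ENNReal.ofReal (2 * (2⁻¹:ℝ) ^ k) * B₁ :=
          mul_le_mul_left (ENNReal.ofReal_le_ofReal hreal) B₁
  have hsum : ∑' k : ℕ, ENNReal.ofReal (2 * (2⁻¹:ℝ) ^ k) * B₁ < ⊤ := by
    have hofr : ∀ k : ℕ, ENNReal.ofReal (2 * (2⁻¹:ℝ) ^ k) = 2 * (2⁻¹ : ℝ≥0∞) ^ k := by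
      intro k
      rw [ENNReal.ofReal_mul (by norm_num), ENNReal.ofReal_pow (by norm_num),
        ENNReal.ofReal_inv_of_pos (by norm_num)]
      norm_num
    simp only [hofr]
    rw [ENNReal.tsum_mul_right, ENNReal.tsum_mul_left, ENNReal.tsum_geometric]
    refine ENNReal.mul_lt_top (ENNReal.mul_lt_top (by norm_num) ?_) measure_ball_lt_top
    rw [ENNReal.one_sub_inv_two]
    simp
  calc ∫⁻ x in ball (0:E) 1, φ x = ∫⁻ x in ball (0:E) 1 \ {0}, φ x := hmono
    _ ≤ ∫⁻ x in ⋃ k, A k, φ x := lintegral_mono_set hsub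
    _ ≤ ∑' k, ∫⁻ x in A k, φ x := lintegral_iUnion_le A φ
    _ ≤ ∑' k : ℕ, ENNReal.ofReal (2 * (2⁻¹:ℝ) ^ k) * B₁ := ENNReal.tsum_le_tsum hterm
    _ < ⊤ := hsum


/-- Weighted estimate for `A₃(x) = ∫_{|y|>2|x|} |f(y)| |y|^{1-n} dy`:
`(∫ A₃(x)^q |x|^{n(q-1)-q} dx)^{1/q} ≤ c(n,q) ‖f‖_{L¹}`. -/
theorem stmt_3 (n : ℕ) (hn : 2 ≤ n) (q : ℝ) (hq1 : 1 ≤ q) (hq2 : q < n / (n - 1)) :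
    ∃ c : ℝ, 0 < c ∧ ∀ f : EuclideanSpace ℝ (Fin n) → ℝ, Integrable f →
      (∫⁻ x : EuclideanSpace ℝ (Fin n), ENNReal.ofReal
          ((∫ y in {y : EuclideanSpace ℝ (Fin n) | 2 * ‖x‖ < ‖y‖},
              |f y| * ‖y‖ ^ ((1 : ℝ) - n)) ^ q * ‖x‖ ^ (n * (q - 1) - q))) ^ (1 / q) ≤
        ENNReal.ofReal (c * ∫ y, |f y|) := by
  haveI : Nonempty (Fin n) := ⟨⟨0, by omega⟩⟩
  have hq0 : (0:ℝ) < q := lt_of_lt_of_le one_pos hq1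
  have hn2 : (2:ℝ) ≤ (n:ℝ) := by exact_mod_cast hn
  have h1n : (1:ℝ) - n ≤ 0 := by linarith
  set E := EuclideanSpace ℝ (Fin n) with hE
  set K₁ : ℝ≥0∞ := ∫⁻ x in ball (0 : E) 1, ENNReal.ofReal (‖x‖ ^ (-1 : ℝ)) with hK₁
  have hK₁top : K₁ ≠ ⊤ := (aux_finite n hn).ne
  set k₀ : ℝ := K₁.toReal with hk₀
  have hk₀nn : 0 ≤ k₀ := ENNReal.toReal_nonneg
  set C : ℝ := 2 ^ (((1:ℝ) - n) * (q - 1)) * (k₀ * 2 ^ ((1:ℝ) - n)) with hC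
  have hCnn : 0 ≤ C := by positivity
  refine ⟨C ^ (1/q) + 1, by positivity, ?_⟩
  intro f hf
  set I : ℝ := ∫ y, |f y| with hIdef
  have hInn : 0 ≤ I := integral_nonneg fun y => abs_nonneg _
  have hfm : AEMeasurable f volume := hf.aestronglyMeasurable.aemeasurable
  by_cases hI0 : I = 0
  · -- trivial case: f = 0 a.e.
    have hf0 : (fun y => |f y|) =ᵐ[volume] 0 := by
      have := (integral_eq_zero_iff_of_nonneg (fun y => abs_nonneg (f y)) hf.abs).1 hI0
      simpa using this
    have hA0 : ∀ x : E, (∫ y in {y : E | 2 * ‖x‖ < ‖y‖},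
        |f y| * ‖y‖ ^ ((1 : ℝ) - n)) = 0 := by
      intro x
      apply integral_eq_zero_of_ae
      apply ae_restrict_of_ae
      filter_upwards [hf0] with y hy
      simp only [Pi.zero_apply] at hy
      simp [show f y = 0 from abs_eq_zero.mp hy]
    simp +zetaDelta only [hA0, Real.zero_rpow hq0.ne', zero_mul, ENNReal.ofReal_zero, lintegral_zero,
      ENNReal.zero_rpow_of_pos (by positivity : (0:ℝ) < 1/q)]
    exact zero_le
  have hIpos : 0 < I := lt_of_le_of_ne hInn (Ne.symm hI0)
  -- notation
  set S : E → Set E := fun x => {y : E | 2 * ‖x‖ < ‖y‖} with hS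
  have hSmeas : ∀ x, MeasurableSet (S x) := fun x =>
    measurableSet_lt measurable_const measurable_norm
  set g : E → ℝ≥0∞ := fun y => ENNReal.ofReal (|f y| * ‖y‖ ^ ((1:ℝ) - n)) with hgdef
  have hg : AEMeasurable g volume := by rw [hgdef]; fun_prop
  set g' : E → ℝ≥0∞ := hg.mk g with hg'def
  have hg'm : Measurable g' := hg.measurable_mk
  have hgg' : g =ᵐ[volume] g' := hg.ae_eq_mk
  set h : E → ℝ≥0∞ := fun x => ENNReal.ofReal (‖x‖ ^ (-1:ℝ)) with hhdef
  have hhm : Measurable h := by rw [hhdef]; fun_prop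
  set C₁ : ℝ := 2 ^ (((1:ℝ) - n) * (q - 1)) * I ^ (q - 1) with hC₁
  have hC₁nn : 0 ≤ C₁ := by positivity
  have hne : ∀ᵐ x : E ∂volume, x ≠ 0 := by
    have h0 : (volume : Measure E) {(0:E)} = 0 := measure_singleton _
    rw [ae_iff]
    simpa using h0
  -- pointwise key estimate
  have hkey : ∀ᵐ x : E ∂volume, ENNReal.ofReal
      ((∫ y in S x, |f y| * ‖y‖ ^ ((1 : ℝ) - n)) ^ q * ‖x‖ ^ ((n:ℝ) * (q - 1) - q)) ≤
      ENNReal.ofReal C₁ * (h x * ∫⁻ y in S x, g' y) := by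
    filter_upwards [hne] with x hx0
    have hxn : (0:ℝ) < ‖x‖ := norm_pos_iff.2 hx0
    have h2x : (0:ℝ) < 2 * ‖x‖ := by positivity
    set A : ℝ := ∫ y in S x, |f y| * ‖y‖ ^ ((1 : ℝ) - n) with hAdef
    have hmeas : AEStronglyMeasurable (fun y : E => |f y| * ‖y‖ ^ ((1:ℝ) - n)) volume :=
      (by fun_prop : AEMeasurable (fun y : E => |f y| * ‖y‖ ^ ((1:ℝ) - n)) volume).aestronglyMeasurable
    have hdom : Integrable (fun y : E => (2*‖x‖) ^ ((1:ℝ)-n) * |f y|) volume :=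
      hf.abs.const_mul _
    have hbound : ∀ y ∈ S x, |f y| * ‖y‖ ^ ((1:ℝ)-n) ≤ (2*‖x‖) ^ ((1:ℝ)-n) * |f y| := by
      intro y hy
      have hy' : 2*‖x‖ < ‖y‖ := hy
      have : ‖y‖ ^ ((1:ℝ)-n) ≤ (2*‖x‖) ^ ((1:ℝ)-n) :=
        Real.rpow_le_rpow_of_nonpos h2x hy'.le h1n
      calc |f y| * ‖y‖ ^ ((1:ℝ)-n) ≤ |f y| * (2*‖x‖) ^ ((1:ℝ)-n) :=
            mul_le_mul_of_nonneg_left this (abs_nonneg _)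
        _ = (2*‖x‖) ^ ((1:ℝ)-n) * |f y| := mul_comm _ _
    have hint : IntegrableOn (fun y : E => |f y| * ‖y‖ ^ ((1:ℝ) - n)) (S x) volume := by
      refine Integrable.mono' (hdom.restrict (s := S x)) (hmeas.restrict) ?_
      filter_upwards [ae_restrict_mem (hSmeas x)] with y hy
      rw [Real.norm_eq_abs, abs_of_nonneg (by positivity)]
      exact hbound y hy
    have hAnn : 0 ≤ A := setIntegral_nonneg (hSmeas x) fun y _ => by positivity
    have hAle : A ≤ (2*‖x‖) ^ ((1:ℝ)-n) * I := by
      calc A ≤ ∫ y in S x, (2*‖x‖) ^ ((1:ℝ)-n) * |f y| :=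
            setIntegral_mono_on hint (hdom.restrict (s := S x)) (hSmeas x) hbound
        _ = (2*‖x‖) ^ ((1:ℝ)-n) * ∫ y in S x, |f y| := integral_const_mul _ _
        _ ≤ (2*‖x‖) ^ ((1:ℝ)-n) * I := by
            apply mul_le_mul_of_nonneg_left _ (by positivity)
            exact setIntegral_le_integral hf.abs (Filter.Eventually.of_forall fun y => abs_nonneg _)
    -- real inequality
    have hRB : A ^ q * ‖x‖ ^ ((n:ℝ) * (q - 1) - q) ≤ C₁ * (‖x‖ ^ (-1:ℝ) * A) := by
      by_cases hA0 : A = 0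
      · rw [hA0, Real.zero_rpow hq0.ne', zero_mul, mul_zero, mul_zero]
      · have h1 : A ^ q = A ^ (q-1) * A := by
          nth_rewrite 1 [show q = (q-1)+1 by ring]
          rw [Real.rpow_add_one hA0]
        have h2 : A ^ (q-1) ≤ ((2*‖x‖) ^ ((1:ℝ)-n) * I) ^ (q-1) :=
          Real.rpow_le_rpow hAnn hAle (by linarith)
        have h3 : ((2*‖x‖) ^ ((1:ℝ)-n) * I) ^ (q-1)
            = 2 ^ (((1:ℝ)-n)*(q-1)) * ‖x‖ ^ (((1:ℝ)-n)*(q-1)) * I ^ (q-1) := by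
          rw [Real.mul_rpow (by positivity) hInn, ← Real.rpow_mul h2x.le,
            Real.mul_rpow (by norm_num : (0:ℝ) ≤ 2) (norm_nonneg x)]
        have h4 : ‖x‖ ^ (((1:ℝ)-n)*(q-1)) * ‖x‖ ^ ((n:ℝ)*(q-1)-q) = ‖x‖ ^ (-1:ℝ) := by
          rw [← Real.rpow_add hxn]
          congr 1
          ring
        calc A ^ q * ‖x‖ ^ ((n:ℝ)*(q-1)-q) = A ^ (q-1) * A * ‖x‖ ^ ((n:ℝ)*(q-1)-q) := by
              rw [h1]
          _ ≤ (2 ^ (((1:ℝ)-n)*(q-1)) * ‖x‖ ^ (((1:ℝ)-n)*(q-1)) * I ^ (q-1)) * A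
                * ‖x‖ ^ ((n:ℝ)*(q-1)-q) := by
              have hstep := mul_le_mul_of_nonneg_right (h2.trans_eq h3) hAnn
              exact mul_le_mul_of_nonneg_right hstep (Real.rpow_nonneg (norm_nonneg x) _)
          _ = (2 ^ (((1:ℝ)-n)*(q-1)) * I ^ (q-1))
                * ((‖x‖ ^ (((1:ℝ)-n)*(q-1)) * ‖x‖ ^ ((n:ℝ)*(q-1)-q)) * A) := by ring
          _ = C₁ * (‖x‖ ^ (-1:ℝ) * A) := by rw [h4, hC₁]
    have hofA : ENNReal.ofReal A = ∫⁻ y in S x, g' y := by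
      rw [hAdef, ofReal_integral_eq_lintegral_ofReal hint
        (by filter_upwards with y using by positivity)]
      exact lintegral_congr_ae (ae_restrict_of_ae hgg')
    calc ENNReal.ofReal (A ^ q * ‖x‖ ^ ((n:ℝ) * (q - 1) - q))
        ≤ ENNReal.ofReal (C₁ * (‖x‖ ^ (-1:ℝ) * A)) := ENNReal.ofReal_le_ofReal hRB
      _ = ENNReal.ofReal C₁ * (ENNReal.ofReal (‖x‖ ^ (-1:ℝ)) * ENNReal.ofReal A) := by
          rw [ENNReal.ofReal_mul hC₁nn, ENNReal.ofReal_mul (Real.rpow_nonneg (norm_nonneg x) _)]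
      _ = ENNReal.ofReal C₁ * (h x * ∫⁻ y in S x, g' y) := by rw [hofA]
  -- global estimate via Tonelli
  set T : ℝ≥0∞ := ∫⁻ x, h x * ∫⁻ y in S x, g' y with hT
  set Tset : Set (E × E) := {p : E × E | 2 * ‖p.1‖ < ‖p.2‖} with hTset
  have hTopen : IsOpen Tset := by
    rw [hTset]
    exact isOpen_lt (by fun_prop) (by fun_prop)
  set F : E × E → ℝ≥0∞ := fun p => Tset.indicator (fun p : E × E => h p.1 * g' p.2) p with hF
  have hFm : Measurable F :=
    ((hhm.comp measurable_fst).mul (hg'm.comp measurable_snd)).indicator hTopen.measurableSet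
  have hxne : h ≠ 0 → True := fun _ => trivial
  have hhtop : ∀ x : E, h x ≠ ⊤ := fun x => ENNReal.ofReal_ne_top
  have step1 : ∀ x : E, h x * ∫⁻ y in S x, g' y = ∫⁻ y, F (x, y) := by
    intro x
    rw [← lintegral_const_mul' (h x) g' (hhtop x), ← lintegral_indicator (hSmeas x)]
    refine lintegral_congr fun y => ?_
    simp only [hF]
    by_cases hy : 2 * ‖x‖ < ‖y‖
    · rw [Set.indicator_of_mem (show y ∈ S x from hy),
        Set.indicator_of_mem (show (x,y) ∈ Tset from hy)]
    · rw [Set.indicator_of_notMem (show y ∉ S x from hy),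
        Set.indicator_of_notMem (show (x,y) ∉ Tset from hy)]
  have hswap : T = ∫⁻ y, ∫⁻ x, F (x, y) := by
    rw [hT]
    simp only [step1]
    exact lintegral_lintegral_swap hFm.aemeasurable
  have step2 : ∀ y : E, ∫⁻ x, F (x, y) = g' y * ∫⁻ x in ball (0:E) (‖y‖/2), h x := by
    intro y
    have hset : ∀ x : E, F (x, y) = (ball (0:E) (‖y‖/2)).indicator (fun x => g' y * h x) x := by
      intro x
      by_cases hx : 2 * ‖x‖ < ‖y‖
      · have hx' : x ∈ ball (0:E) (‖y‖/2) := mem_ball_zero_iff.2 (by linarith)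
        simp only [hF]
        rw [Set.indicator_of_mem (show (x,y) ∈ Tset from hx), Set.indicator_of_mem hx']
        exact mul_comm _ _
      · have hx' : x ∉ ball (0:E) (‖y‖/2) := by
          rw [mem_ball_zero_iff]
          intro hc
          exact hx (by linarith)
        simp only [hF]
        rw [Set.indicator_of_notMem (show (x,y) ∉ Tset from hx),
          Set.indicator_of_notMem hx']
    simp only [hset]
    rw [lintegral_indicator measurableSet_ball, lintegral_const_mul _ hhm]
  have hTbound : T = (ENNReal.ofReal (2 ^ ((1:ℝ) - n)) * K₁) * ENNReal.ofReal I := by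
    rw [hswap]
    have hcongr : ∀ᵐ y : E ∂volume, ∫⁻ x, F (x, y)
        = (ENNReal.ofReal (2 ^ ((1:ℝ) - n)) * K₁) * ENNReal.ofReal (|f y|) := by
      filter_upwards [hne, hgg'] with y hy0 hgy
      have hyn : (0:ℝ) < ‖y‖ := norm_pos_iff.2 hy0
      rw [step2 y, aux_scaling n hn (by positivity : (0:ℝ) < ‖y‖/2), ← hgy, hgdef]
      simp only
      have hr : |f y| * ‖y‖ ^ ((1:ℝ) - n) * ((‖y‖/2) ^ ((n:ℝ)-1)) = 2 ^ ((1:ℝ)-n) * |f y| := by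
        rw [Real.div_rpow (norm_nonneg y) (by norm_num : (0:ℝ) ≤ 2), div_eq_mul_inv,
          ← Real.rpow_neg (by norm_num : (0:ℝ) ≤ 2)]
        have e1 : ‖y‖ ^ ((1:ℝ)-n) * (‖y‖ ^ ((n:ℝ)-1)) = 1 := by
          rw [← Real.rpow_add hyn, show (1:ℝ) - n + ((n:ℝ)-1) = 0 by ring, Real.rpow_zero]
        have e2 : -((n:ℝ)-1) = (1:ℝ) - n := by ring
        calc |f y| * ‖y‖ ^ ((1:ℝ)-n) * (‖y‖ ^ ((n:ℝ)-1) * 2 ^ (-((n:ℝ)-1)))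
            = (‖y‖ ^ ((1:ℝ)-n) * ‖y‖ ^ ((n:ℝ)-1)) * (2 ^ (-((n:ℝ)-1)) * |f y|) := by ring
          _ = 2 ^ ((1:ℝ)-n) * |f y| := by rw [e1, one_mul, e2]
      calc ENNReal.ofReal (|f y| * ‖y‖ ^ ((1:ℝ)-n)) * (ENNReal.ofReal ((‖y‖/2) ^ ((n:ℝ)-1)) * K₁)
          = ENNReal.ofReal (|f y| * ‖y‖ ^ ((1:ℝ)-n) * (‖y‖/2) ^ ((n:ℝ)-1)) * K₁ := by
            rw [← mul_assoc, ← ENNReal.ofReal_mul (by positivity)]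
        _ = ENNReal.ofReal (2 ^ ((1:ℝ)-n) * |f y|) * K₁ := by rw [hr]
        _ = (ENNReal.ofReal (2 ^ ((1:ℝ)-n)) * K₁) * ENNReal.ofReal (|f y|) := by
            rw [ENNReal.ofReal_mul (by positivity)]
            ring
    rw [lintegral_congr_ae hcongr, lintegral_const_mul' _ _
      (ENNReal.mul_ne_top ENNReal.ofReal_ne_top hK₁top)]
    congr 1
    rw [← ofReal_integral_eq_lintegral_ofReal hf.abs
      (Filter.Eventually.of_forall fun y => abs_nonneg _)]
  have hIq : I ^ q = I ^ (q-1) * I := by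
    nth_rewrite 1 [show q = (q-1)+1 by ring]
    rw [Real.rpow_add_one hI0]
  have hMain : (∫⁻ x : E, ENNReal.ofReal
      ((∫ y in S x, |f y| * ‖y‖ ^ ((1 : ℝ) - n)) ^ q * ‖x‖ ^ ((n:ℝ) * (q - 1) - q)))
      ≤ ENNReal.ofReal (C * I ^ q) := by
    calc (∫⁻ x : E, ENNReal.ofReal
        ((∫ y in S x, |f y| * ‖y‖ ^ ((1 : ℝ) - n)) ^ q * ‖x‖ ^ ((n:ℝ) * (q - 1) - q)))
        ≤ ∫⁻ x, ENNReal.ofReal C₁ * (h x * ∫⁻ y in S x, g' y) := lintegral_mono_ae hkey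
      _ = ENNReal.ofReal C₁ * T := lintegral_const_mul' _ _ ENNReal.ofReal_ne_top
      _ = ENNReal.ofReal C₁ * ((ENNReal.ofReal (2 ^ ((1:ℝ) - n)) * ENNReal.ofReal k₀)
            * ENNReal.ofReal I) := by
          rw [hTbound, hk₀, ENNReal.ofReal_toReal hK₁top]
      _ = ENNReal.ofReal (C₁ * (2 ^ ((1:ℝ) - n) * k₀ * I)) := by
          rw [← ENNReal.ofReal_mul (by positivity : (0:ℝ) ≤ 2 ^ ((1:ℝ) - n)),
            ← ENNReal.ofReal_mul (by positivity), ← ENNReal.ofReal_mul hC₁nn]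
      _ = ENNReal.ofReal (C * I ^ q) := by
          congr 1
          rw [hC₁, hC, hIq]
          ring
  calc (∫⁻ x : E, ENNReal.ofReal
      ((∫ y in S x, |f y| * ‖y‖ ^ ((1 : ℝ) - n)) ^ q * ‖x‖ ^ ((n:ℝ) * (q - 1) - q))) ^ (1/q)
      ≤ (ENNReal.ofReal (C * I ^ q)) ^ (1/q) := ENNReal.rpow_le_rpow hMain (by positivity)
    _ = ENNReal.ofReal ((C * I ^ q) ^ (1/q)) :=
        ENNReal.ofReal_rpow_of_nonneg (by positivity) (by positivity)
    _ = ENNReal.ofReal (C ^ (1/q) * I) := by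
        rw [Real.mul_rpow hCnn (Real.rpow_nonneg hInn q), ← Real.rpow_mul hInn,
          mul_one_div_cancel hq0.ne', Real.rpow_one]
    _ ≤ ENNReal.ofReal ((C ^ (1/q) + 1) * I) := by
        apply ENNReal.ofReal_le_ofReal
        apply mul_le_mul_of_nonneg_right _ hInn
        linarith [Real.rpow_nonneg hCnn (1/q)]


end
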